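/- Suppose there exists an integer t₀ ≥ 1 with q_{t₀} = c. Let s₁ and s₂ be integers with 0 ≤ s₁ < T, 0 ≤ s₂ < T, t₀ + s₁ ≤ T and t₀ + s₂ ≤ T, and let f*_{(sᵢ,0)} = min over t ∈ {sᵢ + 1, …, T} of f_{(sᵢ,0)}(t) for i = 1, 2. Then f*_{(s₁,0)} − f*_{(s₂,0)} = (s₂ − s₁) c. -/

import Mathlib

open MeasureTheory ProbabilityTheory Real

/-- Suppose some integer `t₀ ≥ 1` satisfies `q_{t₀} = c`. If `s₁, s₂` satisfy
`0 ≤ sᵢ < T` and `t₀ + sᵢ ≤ T`, then `f*_{(s₁,0)} − f*_{(s₂,0)} = (s₂ − s₁) c`, where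
`f*_{(sᵢ,0)} = min_{t ∈ {sᵢ+1,…,T}} f_{(sᵢ,0)}(t)`. -/
theorem min_objective_difference_eq
    {Ω : Type*} [MeasureSpace Ω] [IsProbabilityMeasure (ℙ : Measure Ω)]
    (θ β g h m : ℝ) (hθ : 0 < θ) (hβ : 1 < β) (hg : 0 ≤ g) (hh : 0 ≤ h) (hm : 0 ≤ m)
    (L : Ω → ℕ) (hmeasL : Measurable L) (hposL : ∀ ω, 1 ≤ L ω)
    (hsurvL : ∀ u : ℕ, ℙ {ω | u < L ω} = ENNReal.ofReal (Real.exp (-θ * (u : ℝ) ^ β)))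
    (q : ℕ → ℝ)
    (hq : ∀ t : ℕ, 1 ≤ t →
      q t = ((1 - Real.exp (-θ * (t : ℝ) ^ β)) * g
            + Real.exp (-θ * (t : ℝ) ^ β) * (h + m * t))
          / ((∑ k ∈ Finset.Icc 1 t,
              (Real.exp (-θ * ((k : ℝ) - 1) ^ β) - Real.exp (-θ * (k : ℝ) ^ β)) * (k : ℝ))
            + Real.exp (-θ * (t : ℝ) ^ β) * (t : ℝ)))
    (c : ℝ) (hc : c = ⨅ t : ℕ, q (t + 1))
    (T : ℕ) (hT : 1 ≤ T)
    (f : ℕ → ℕ → ℝ)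
    (hf : ∀ s' : ℕ, s' < T → ∀ t : ℕ, s' + 1 ≤ t → t ≤ T →
      f s' t = ∫ ω, (if (s' : ℝ) + (L ω : ℝ) ≤ (t : ℝ) then
                  g + ((T : ℝ) - ((s' : ℝ) + (L ω : ℝ))) * c
                else h + ((t : ℝ) - (s' : ℝ)) * m + ((T : ℝ) - (t : ℝ)) * c) ∂ℙ)
    (t₀ : ℕ) (ht₀ : 1 ≤ t₀) (hqt₀ : q t₀ = c)
    (s₁ s₂ : ℕ) (hs₁ : s₁ < T) (hs₂ : s₂ < T)
    (ht₀s₁ : t₀ + s₁ ≤ T) (ht₀s₂ : t₀ + s₂ ≤ T)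
    (hne₁ : (Finset.Icc (s₁ + 1) T).Nonempty) (hne₂ : (Finset.Icc (s₂ + 1) T).Nonempty) :
    (Finset.Icc (s₁ + 1) T).inf' hne₁ (f s₁) - (Finset.Icc (s₂ + 1) T).inf' hne₂ (f s₂)
      = ((s₂ : ℝ) - (s₁ : ℝ)) * c := by
  classical
  have hβ0 : (0:ℝ) < β := lt_trans one_pos hβ
  set S : ℕ → ℝ := fun n => Real.exp (-θ * (n : ℝ) ^ β) with hSdef
  have hSn : ∀ n : ℕ, S n = Real.exp (-θ * (n : ℝ) ^ β) := fun n => rfl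
  have hS0 : S 0 = 1 := by
    rw [hSn]
    norm_num [Real.zero_rpow (ne_of_gt hβ0)]
  have hSpos : ∀ n, 0 < S n := fun n => Real.exp_pos _
  have hSle1 : ∀ n, S n ≤ 1 := by
    intro n
    rw [hSn, Real.exp_le_one_iff]
    have h1 : (0:ℝ) ≤ (n:ℝ) ^ β := Real.rpow_nonneg (Nat.cast_nonneg n) β
    nlinarith
  have hSmono : ∀ n : ℕ, S (n+1) ≤ S n := by
    intro n
    rw [hSn, hSn]
    apply Real.exp_le_exp.2
    have h1 : ((n:ℝ)) ^ β ≤ (((n+1:ℕ)):ℝ) ^ β := by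
      apply Real.rpow_le_rpow (Nat.cast_nonneg n) _ (le_of_lt hβ0)
      push_cast; linarith
    nlinarith
  have hSanti : ∀ k : ℕ, 1 ≤ k → S k ≤ S (k-1) := by
    intro k hk
    have h1 := hSmono (k-1)
    rwa [Nat.sub_add_cancel hk] at h1
  set D : ℕ → ℝ := fun d => (∑ k ∈ Finset.Icc 1 d, (S (k-1) - S k) * (k:ℝ)) + S d * (d:ℝ)
    with hDdef
  set N : ℕ → ℝ := fun d => (1 - S d) * g + S d * (h + m * d) with hNdef
  have hqND : ∀ d : ℕ, 1 ≤ d → q d = N d / D d := by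
    intro d hd
    rw [hq d hd]
    congr 1
    simp only [hDdef]
    congr 1
    apply Finset.sum_congr rfl
    intro k hk
    have hk1 : 1 ≤ k := (Finset.mem_Icc.mp hk).1
    have hcast : ((k:ℝ) - 1) = (((k - 1 : ℕ)):ℝ) := by
      rw [Nat.cast_sub hk1]; norm_num
    rw [hcast, hSn, hSn]
  have hDpos : ∀ d : ℕ, 1 ≤ d → 0 < D d := by
    intro d hd
    have h1 : 0 ≤ ∑ k ∈ Finset.Icc 1 d, (S (k-1) - S k) * (k:ℝ) := by
      apply Finset.sum_nonneg
      intro k hk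
      have hk1 : 1 ≤ k := (Finset.mem_Icc.mp hk).1
      have h2 := hSanti k hk1
      have h3 : (0:ℝ) ≤ (k:ℝ) := Nat.cast_nonneg k
      nlinarith
    have h2 : 0 < S d * (d:ℝ) := by
      have hd' : (0:ℝ) < (d:ℝ) := by exact_mod_cast hd
      exact mul_pos (hSpos d) hd'
    simp only [hDdef]
    linarith
  have hNnn : ∀ d : ℕ, 0 ≤ N d := by
    intro d
    simp only [hNdef]
    have h1 := hSle1 d
    have h2 := hSpos d
    have h3 : (0:ℝ) ≤ (d:ℝ) := Nat.cast_nonneg d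
    have h4 := mul_nonneg (sub_nonneg.2 h1) hg
    have h5 : (0:ℝ) ≤ h + m * d := by nlinarith
    nlinarith
  have hqnn : ∀ d : ℕ, 1 ≤ d → 0 ≤ q d := by
    intro d hd
    rw [hqND d hd]
    exact div_nonneg (hNnn d) (le_of_lt (hDpos d hd))
  have hbdd : BddBelow (Set.range fun t : ℕ => q (t + 1)) := by
    refine ⟨0, ?_⟩
    rintro x ⟨t, rfl⟩
    exact hqnn (t+1) (by omega)
  have hcle : ∀ d : ℕ, 1 ≤ d → c ≤ q d := by
    intro d hd
    have h1 := ciInf_le hbdd (d - 1)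
    have h2 : d - 1 + 1 = d := Nat.sub_add_cancel hd
    rw [h2] at h1
    rw [hc]
    exact h1
  -- measure facts
  have hmeq : ∀ n : ℕ, MeasurableSet {ω | L ω = n} :=
    fun n => hmeasL (measurableSet_singleton n)
  have hmgt : ∀ n : ℕ, MeasurableSet {ω | n < L ω} :=
    fun n => hmeasL measurableSet_Ioi
  have hPgt : ∀ n : ℕ, (ℙ {ω | n < L ω}).toReal = S n := by
    intro n
    rw [hsurvL n]
    exact ENNReal.toReal_ofReal (le_of_lt (Real.exp_pos _))
  have hPeq : ∀ n : ℕ, 1 ≤ n → (ℙ {ω | L ω = n}).toReal = S (n-1) - S n := by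
    intro n hn
    have hset : {ω | L ω = n} = {ω | (n - 1 : ℕ) < L ω} \ {ω | n < L ω} := by
      ext ω
      simp only [Set.mem_setOf_eq, Set.mem_diff, not_lt]
      omega
    have hsub : {ω | n < L ω} ⊆ {ω | (n - 1 : ℕ) < L ω} := by
      intro ω hω
      simp only [Set.mem_setOf_eq] at *
      omega
    rw [hset, measure_diff hsub (hmgt n).nullMeasurableSet (measure_ne_top ℙ _),
      hsurvL, hsurvL, ← ENNReal.ofReal_sub _ (le_of_lt (Real.exp_pos _)),
      ENNReal.toReal_ofReal]
    have := hSanti n hn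
    rw [hSn, hSn] at this
    linarith
  -- telescoping
  have htel : ∀ d : ℕ, (∑ n ∈ Finset.Icc 1 d, (S (n-1) - S n)) = 1 - S d := by
    intro d
    rw [← Finset.Ico_add_one_right_eq_Icc, Finset.sum_Ico_eq_sum_range]
    calc (∑ k ∈ Finset.range (Nat.succ d - 1), (S (1 + k - 1) - S (1 + k)))
        = ∑ k ∈ Finset.range d, (S k - S (k+1)) := by
          apply Finset.sum_congr
          · congr 1
          · intro k _
            rw [show 1 + k - 1 = k from by omega, show 1 + k = k + 1 from by omega]
      _ = S 0 - S d := Finset.sum_range_sub' S d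
      _ = 1 - S d := by rw [hS0]
  -- main evaluation
  have hfeval : ∀ s' : ℕ, s' < T → ∀ d : ℕ, 1 ≤ d → s' + d ≤ T →
      f s' (s' + d) = (N d - c * D d) + ((T:ℝ) - (s':ℝ)) * c := by
    intro s' hs' d hd hsd
    rw [hf s' hs' (s' + d) (by omega) (by omega)]
    have hpoint : ∀ ω : Ω,
        (if (s' : ℝ) + (L ω : ℝ) ≤ ((s' + d : ℕ) : ℝ) then
            g + ((T : ℝ) - ((s' : ℝ) + (L ω : ℝ))) * c
          else h + (((s' + d : ℕ) : ℝ) - (s' : ℝ)) * m + ((T : ℝ) - ((s' + d : ℕ) : ℝ)) * c)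
        = (∑ n ∈ Finset.Icc 1 d,
            Set.indicator {ω' | L ω' = n}
              (fun _ => g + ((T : ℝ) - ((s' : ℝ) + (n : ℝ))) * c) ω)
          + Set.indicator {ω' | d < L ω'}
              (fun _ => h + (((s' + d : ℕ) : ℝ) - (s' : ℝ)) * m
                + ((T : ℝ) - ((s' + d : ℕ) : ℝ)) * c) ω := by
      intro ω
      by_cases hL : L ω ≤ d
      · have hcond : (s' : ℝ) + (L ω : ℝ) ≤ ((s' + d : ℕ) : ℝ) := by
          push_cast
          have : (L ω : ℝ) ≤ (d : ℝ) := by exact_mod_cast hL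
          linarith
        rw [if_pos hcond]
        have hmem : L ω ∈ Finset.Icc 1 d := Finset.mem_Icc.mpr ⟨hposL ω, hL⟩
        rw [Finset.sum_eq_single_of_mem (L ω) hmem ?_,
          Set.indicator_of_mem (show ω ∈ {ω' | L ω' = L ω} from rfl),
          Set.indicator_of_notMem
            (show ω ∉ {ω' | d < L ω'} by simp only [Set.mem_setOf_eq, not_lt]; exact hL)]
        · ring
        · intro n hn hne
          apply Set.indicator_of_notMem
          simp only [Set.mem_setOf_eq]
          exact fun hLn => hne (by omega)
      · rw [if_neg (by
            push_cast
            have : (d : ℝ) < (L ω : ℝ) := by exact_mod_cast Nat.lt_of_not_le hL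
            push_cast
            linarith)]
        rw [Finset.sum_eq_zero, Set.indicator_of_mem
          (show ω ∈ {ω' | d < L ω'} from Nat.lt_of_not_le hL)]
        · ring
        · intro n hn
          apply Set.indicator_of_notMem
          simp only [Set.mem_setOf_eq]
          have := (Finset.mem_Icc.mp hn).2
          omega
    simp only [hpoint]
    have hintA : ∀ n ∈ Finset.Icc 1 d,
        Integrable (Set.indicator {ω' | L ω' = n}
          (fun _ => g + ((T : ℝ) - ((s' : ℝ) + (n : ℝ))) * c)) ℙ :=
      fun n _ => (integrable_const _).indicator (hmeq n)
    have hintC : Integrable (Set.indicator {ω' | d < L ω'}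
        (fun _ => h + (((s' + d : ℕ) : ℝ) - (s' : ℝ)) * m
          + ((T : ℝ) - ((s' + d : ℕ) : ℝ)) * c)) ℙ :=
      (integrable_const _).indicator (hmgt d)
    rw [integral_add (integrable_finset_sum _ hintA) hintC,
      integral_finset_sum _ hintA,
      MeasureTheory.integral_indicator_const _ (hmgt d)]
    rw [show (∑ n ∈ Finset.Icc 1 d, ∫ ω, Set.indicator {ω' | L ω' = n}
          (fun _ => g + ((T : ℝ) - ((s' : ℝ) + (n : ℝ))) * c) ω ∂ℙ)
        = ∑ n ∈ Finset.Icc 1 d,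
            (S (n-1) - S n) * (g + ((T : ℝ) - ((s' : ℝ) + (n : ℝ))) * c) from
      Finset.sum_congr rfl fun n hn => by
        rw [MeasureTheory.integral_indicator_const _ (hmeq n), measureReal_def,
          hPeq n (Finset.mem_Icc.mp hn).1, smul_eq_mul]]
    rw [measureReal_def, hPgt d, smul_eq_mul]
    have hsplit : (∑ n ∈ Finset.Icc 1 d,
        (S (n-1) - S n) * (g + ((T : ℝ) - ((s' : ℝ) + (n : ℝ))) * c))
        = (∑ n ∈ Finset.Icc 1 d, (S (n-1) - S n)) * (g + ((T:ℝ) - (s':ℝ)) * c)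
          - (∑ n ∈ Finset.Icc 1 d, (S (n-1) - S n) * (n:ℝ)) * c := by
      rw [Finset.sum_mul, Finset.sum_mul, ← Finset.sum_sub_distrib]
      apply Finset.sum_congr rfl
      intro n hn
      ring
    rw [hsplit, htel d]
    simp only [hNdef, hDdef]
    push_cast
    ring
  -- value of the minimum
  have hfstar : ∀ s' : ℕ, s' < T → t₀ + s' ≤ T → ∀ hne : (Finset.Icc (s'+1) T).Nonempty,
      (Finset.Icc (s'+1) T).inf' hne (f s') = ((T:ℝ) - (s':ℝ)) * c := by
    intro s' hs' hts hne
    apply le_antisymm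
    · have hmem : s' + t₀ ∈ Finset.Icc (s'+1) T := Finset.mem_Icc.mpr ⟨by omega, by omega⟩
      refine le_trans (Finset.inf'_le _ hmem) ?_
      rw [hfeval s' hs' t₀ ht₀ (by omega)]
      have hNd : N t₀ = q t₀ * D t₀ := by
        rw [hqND t₀ ht₀, div_mul_cancel₀ _ (hDpos t₀ ht₀).ne']
      have hz : N t₀ - c * D t₀ = 0 := by rw [hNd, hqt₀]; ring
      linarith
    · apply Finset.le_inf' hne
      intro t ht
      obtain ⟨h1, h2⟩ := Finset.mem_Icc.mp ht
      obtain ⟨d, hd1, rfl⟩ : ∃ d, 1 ≤ d ∧ t = s' + d := ⟨t - s', by omega, by omega⟩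
      rw [hfeval s' hs' d hd1 (by omega)]
      have hD := hDpos d hd1
      have hqd := hcle d hd1
      have hNd : N d = q d * D d := by
        rw [hqND d hd1, div_mul_cancel₀ _ hD.ne']
      nlinarith [mul_nonneg (sub_nonneg.2 hqd) hD.le]
  rw [hfstar s₁ hs₁ ht₀s₁ hne₁, hfstar s₂ hs₂ ht₀s₂ hne₂]
  ring
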